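/- Let h₁, h₂ ∈ (0,1), τ > 0, μ < 0, and suppose ε h₂ μ ≠ h₁². If τ > -4h₁/(h₂² μ) and ε > 2h₁²/(μ h₂) + h₁ h₂ τ/2, then both roots of the quadratic (h₁² - ε h₂ μ) λ² - (2h₁² + h₂² h₁ τ μ - ε h₂ μ) λ + h₁² = 0 have modulus strictly less than 1. -/

import Mathlib

lemma jury_aux (A B C : ℝ) (hA : 0 < A) (hC : 0 < C) (hCA : C < A)
    (hm : 0 < A - B + C) (hp : 0 < A + B + C) :
    ∀ lam : ℂ, (A : ℂ) * lam ^ 2 - (B : ℂ) * lam + (C : ℂ) = 0 →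
      ‖lam‖ < 1 := by
  intro lam heq
  by_cases him : lam.im = 0
  · -- real root
    set x := lam.re with hx
    have hlam : lam = (x : ℂ) := by
      apply Complex.ext <;> simp [him, hx]
    rw [hlam] at heq
    have hre : A * x ^ 2 - B * x + C = 0 := by exact_mod_cast heq
    have key : (A - B + C) * (A + B + C) * x ^ 2
        = (1 - x ^ 2) * (A ^ 2 * x ^ 2 - C ^ 2) := by
      linear_combination (A * x ^ 2 + C + B * x) * hre
    have hx2 : x ^ 2 < 1 := by
      by_contra h
      push_neg at h
      have e1 : 0 < A ^ 2 * x ^ 2 - C ^ 2 := by nlinarith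
      have e2 : 0 ≤ (x ^ 2 - 1) * (A ^ 2 * x ^ 2 - C ^ 2) := mul_nonneg (by linarith) e1.le
      have e3 : 0 < (A - B + C) * (A + B + C) * x ^ 2 :=
        mul_pos (mul_pos hm hp) (by linarith)
      nlinarith [key, e2, e3]
    rw [hlam, Complex.norm_real, Real.norm_eq_abs]
    have := abs_nonneg x
    nlinarith [sq_abs x]
  · -- nonreal root: conjugate is also a root
    have hconj : (A : ℂ) * ((starRingEnd ℂ) lam) ^ 2 - (B : ℂ) * ((starRingEnd ℂ) lam)
        + (C : ℂ) = 0 := by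
      have h := congrArg (starRingEnd ℂ) heq
      simpa [map_sub, map_add, map_mul, map_pow, Complex.conj_ofReal] using h
    have hdiff : (lam - (starRingEnd ℂ) lam) * ((A : ℂ) * (lam + (starRingEnd ℂ) lam) - B) = 0 := by
      linear_combination heq - hconj
    have hne0 : lam - (starRingEnd ℂ) lam ≠ 0 := by
      rw [Complex.sub_conj]
      simp [him]
    have hsum : (A : ℂ) * (lam + (starRingEnd ℂ) lam) - B = 0 :=
      (mul_eq_zero.mp hdiff).resolve_left hne0
    have hprod : (C : ℂ) = (A : ℂ) * (lam * (starRingEnd ℂ) lam) := by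
      linear_combination heq - lam * hsum
    rw [Complex.mul_conj] at hprod
    have hreal : C = A * Complex.normSq lam := by exact_mod_cast hprod
    have h1 : Complex.normSq lam < 1 := by
      nlinarith [Complex.normSq_nonneg lam]
    have h2 : ‖lam‖ ^ 2 < 1 := by
      rwa [Complex.sq_norm]
    nlinarith [norm_nonneg lam]

theorem stmt11 (h₁ h₂ τ ε μ : ℝ) (hh₁ : h₁ ∈ Set.Ioo (0 : ℝ) 1) (hh₂ : h₂ ∈ Set.Ioo (0 : ℝ) 1)
    (hτ : 0 < τ) (hμ : μ < 0) (hne : ε * h₂ * μ ≠ h₁ ^ 2)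
    (hτ' : τ > -4 * h₁ / (h₂ ^ 2 * μ))
    (hε : ε > 2 * h₁ ^ 2 / (μ * h₂) + h₁ * h₂ * τ / 2) :
    ∀ lam : ℂ,
      ((h₁ ^ 2 - ε * h₂ * μ : ℝ) : ℂ) * lam ^ 2 -
        ((2 * h₁ ^ 2 + h₂ ^ 2 * h₁ * τ * μ - ε * h₂ * μ : ℝ) : ℂ) * lam +
        ((h₁ ^ 2 : ℝ) : ℂ) = 0 →
      ‖lam‖ < 1 := by
  obtain ⟨h1p, h1l⟩ := hh₁
  obtain ⟨h2p, h2l⟩ := hh₂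
  have h2μ : h₂ ^ 2 * μ < 0 := mul_neg_of_pos_of_neg (by positivity) hμ
  have hμ2 : μ * h₂ < 0 := mul_neg_of_neg_of_pos hμ h2p
  -- clear denominators in hτ'
  have t1 : τ * (h₂ ^ 2 * μ) < -4 * h₁ := by
    have := mul_lt_mul_of_neg_right hτ' h2μ
    rwa [div_mul_cancel₀ _ (ne_of_lt h2μ)] at this
  have t2 : ε * (μ * h₂) < 2 * h₁ ^ 2 + h₁ * h₂ * τ / 2 * (μ * h₂) := by
    have := mul_lt_mul_of_neg_right hε hμ2
    rw [add_mul, div_mul_cancel₀ _ (ne_of_lt hμ2)] at this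
    linarith
  have hεμ : ε * h₂ * μ < 0 := by nlinarith [mul_lt_mul_of_pos_left t1 (by linarith : (0:ℝ) < h₁ / 2)]
  have hC : (0:ℝ) < h₁ ^ 2 := by positivity
  have hA : (0:ℝ) < h₁ ^ 2 - ε * h₂ * μ := by linarith
  have hCA : h₁ ^ 2 < h₁ ^ 2 - ε * h₂ * μ := by linarith
  have hm : (0:ℝ) < (h₁ ^ 2 - ε * h₂ * μ) - (2 * h₁ ^ 2 + h₂ ^ 2 * h₁ * τ * μ - ε * h₂ * μ) + h₁ ^ 2 := by
    nlinarith [mul_pos (mul_pos (mul_pos (pow_pos h2p 2) h1p) hτ) (neg_pos.mpr hμ)]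
  have hp : (0:ℝ) < (h₁ ^ 2 - ε * h₂ * μ) + (2 * h₁ ^ 2 + h₂ ^ 2 * h₁ * τ * μ - ε * h₂ * μ) + h₁ ^ 2 := by
    nlinarith [t2]
  exact jury_aux _ _ _ hA hC hCA hm hp
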